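/- Let $n \geq 2$ and consider the matched pair $(\mathbb{S}_{n-1}, C_n)$ from the exact factorization $\mathbb{S}_n = F C_n$, $F$ the stabilizer of $n$, $C_n = \langle z\rangle$ with $z = (1\,2\,\cdots\,n)$. For each $1 \leq j \leq n-1$, the stabilizer in $F$ of $z^j$ under the action $\vartriangleleft$ is $F_{z^j} = \{x \in F \mid x(n-j) = n-j\}$, which is isomorphic to $\mathbb{S}_{n-2}$. In particular, the only subgroup of $F$ acting trivially on $C_n$ (via $\vartriangleleft$) is the trivial subgroup, provided $n \geq 3$. -/

import Mathlib

open Equiv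

private def permMulCongr {α β : Type*} (e : α ≃ β) : Perm α ≃* Perm β where
  toEquiv := e.permCongr
  map_mul' σ τ := by
    ext x
    simp [Equiv.permCongr_apply, Equiv.Perm.mul_apply]

open Fin.NatCast in
private lemma finRotate_pow_apply (m a : ℕ) : ∀ (i : Fin (m + 1)),
    (finRotate (m + 1) ^ a) i = i + (a : Fin (m + 1)) := by
  induction a with
  | zero => simp
  | succ a ih =>
    intro i
    rw [pow_succ, Equiv.Perm.mul_apply, finRotate_succ_apply, ih (i + 1)]
    push_cast
    abel

open Fin.NatCast in
private lemma zpowers_fix_last_eq_one (m : ℕ) (d : Perm (Fin (m + 1)))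
    (hd : d ∈ Subgroup.zpowers (finRotate (m + 1)))
    (h : d (Fin.last m) = Fin.last m) : d = 1 := by
  obtain ⟨a, rfl⟩ := mem_powers_iff_mem_zpowers.mpr hd
  rw [finRotate_pow_apply] at h
  have ha : (a : Fin (m + 1)) = 0 :=
    add_left_cancel (a := Fin.last m) (by rw [add_zero]; exact h)
  ext i
  rw [finRotate_pow_apply, ha, add_zero, Equiv.Perm.one_apply]

theorem sn_cn_stabilizers (m : ℕ)
    (r : Subgroup.zpowers (finRotate (m + 1)) →
         MulAction.stabilizer (Equiv.Perm (Fin (m + 1))) (Fin.last m) →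
         MulAction.stabilizer (Equiv.Perm (Fin (m + 1))) (Fin.last m))
    (l : Subgroup.zpowers (finRotate (m + 1)) →
         MulAction.stabilizer (Equiv.Perm (Fin (m + 1))) (Fin.last m) →
         Subgroup.zpowers (finRotate (m + 1)))
    (hdef : ∀ (g : Subgroup.zpowers (finRotate (m + 1)))
        (x : MulAction.stabilizer (Equiv.Perm (Fin (m + 1))) (Fin.last m)),
        (↑g * ↑x : Equiv.Perm (Fin (m + 1))) = ↑(r g x) * ↑(l g x)) :
    (∀ j : ℕ, 1 ≤ j → j ≤ m →
      ∃ S : Subgroup (MulAction.stabilizer (Equiv.Perm (Fin (m + 1))) (Fin.last m)),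
        (∀ x, x ∈ S ↔
          l ⟨finRotate (m + 1) ^ j, Subgroup.pow_mem _ (Subgroup.mem_zpowers _) j⟩ x
            = ⟨finRotate (m + 1) ^ j, Subgroup.pow_mem _ (Subgroup.mem_zpowers _) j⟩) ∧
        (∀ x, x ∈ S ↔
          (↑x : Equiv.Perm (Fin (m + 1))) ⟨m - j, by omega⟩ = ⟨m - j, by omega⟩) ∧
        Nonempty (S ≃* Equiv.Perm (Fin (m - 1)))) ∧
    (3 ≤ m + 1 → ∀ x, (∀ g, l g x = g) → x = 1) := by
  -- key consequence of `hdef`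
  have keyA : ∀ (g : Subgroup.zpowers (finRotate (m + 1)))
      (x : MulAction.stabilizer (Equiv.Perm (Fin (m + 1))) (Fin.last m)),
      (↑x : Perm (Fin (m + 1))) ((↑(l g x) : Perm (Fin (m + 1)))⁻¹ (Fin.last m))
        = (↑g : Perm (Fin (m + 1)))⁻¹ (Fin.last m) := by
    intro g x
    have hr : (↑(r g x) : Perm (Fin (m + 1))) (Fin.last m) = Fin.last m := (r g x).2
    have h : (↑(r g x) : Perm (Fin (m + 1))) = ↑g * ↑x * (↑(l g x))⁻¹ :=
      eq_mul_inv_iff_mul_eq.mpr (hdef g x).symm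
    rw [h, Equiv.Perm.mul_apply, Equiv.Perm.mul_apply] at hr
    exact (Equiv.Perm.eq_inv_iff_eq).mpr hr
  have hval : ∀ (q : ℕ) (hq : q ≤ m),
      (finRotate (m + 1) ^ (m - q)) ⟨q, by omega⟩ = Fin.last m := by
    intro q hq
    rw [finRotate_pow_apply]
    apply Fin.ext
    rw [Fin.val_add, Fin.val_natCast, Fin.val_last]
    rw [Nat.mod_eq_of_lt (by omega : m - q < m + 1)]
    rw [Nat.add_sub_cancel' hq, Nat.mod_eq_of_lt (by omega)]
  constructor
  · intro j hj1 hj2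
    set zj : Subgroup.zpowers (finRotate (m + 1)) :=
      ⟨finRotate (m + 1) ^ j, Subgroup.pow_mem _ (Subgroup.mem_zpowers _) j⟩ with hzj
    set pt : Fin (m + 1) := ⟨m - j, by omega⟩ with hptdef
    have hptval : (finRotate (m + 1) ^ j) pt = Fin.last m := by
      have h := hval (m - j) (by omega)
      rwa [(by omega : m - (m - j) = j)] at h
    have hptinv : ((finRotate (m + 1) ^ j : Perm (Fin (m + 1))))⁻¹ (Fin.last m) = pt :=
      Equiv.Perm.inv_eq_iff_eq.mpr hptval.symm
    have hchar : ∀ x, l zj x = zj ↔ (↑x : Perm (Fin (m + 1))) pt = pt := by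
      intro x
      constructor
      · intro hl
        have h1 := keyA zj x
        rw [hl] at h1
        rw [show ((↑zj : Perm (Fin (m + 1))))⁻¹ (Fin.last m) = pt from hptinv] at h1
        exact h1
      · intro hpt
        have h1 := keyA zj x
        rw [show ((↑zj : Perm (Fin (m + 1))))⁻¹ (Fin.last m) = pt from hptinv] at h1
        have h2 : ((↑(l zj x) : Perm (Fin (m + 1))))⁻¹ (Fin.last m) = pt := by
          refine Equiv.injective (↑x : Perm (Fin (m + 1))) ?_
          rw [h1, hpt]
        have h3 : ((finRotate (m + 1) ^ j) * (↑(l zj x) : Perm (Fin (m + 1)))⁻¹)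
            (Fin.last m) = Fin.last m := by
          rw [Equiv.Perm.mul_apply, h2, hptval]
        have h4 := zpowers_fix_last_eq_one m _
          (Subgroup.mul_mem _ (Subgroup.pow_mem _ (Subgroup.mem_zpowers _) j)
            (Subgroup.inv_mem _ (l zj x).2)) h3
        exact Subtype.ext (mul_inv_eq_one.mp h4).symm
    refine ⟨MulAction.stabilizer _ pt, ?_, ?_, ?_⟩
    · intro x
      rw [MulAction.mem_stabilizer_iff]
      exact (Iff.rfl.trans (hchar x).symm).symm.symm
    · intro x
      rw [MulAction.mem_stabilizer_iff]
      exact Iff.rfl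
    · -- the isomorphism with S_{m-1}
      have hptne : pt ≠ Fin.last m := by
        intro h
        have : pt.val = m := by rw [h]; rfl
        simp only [hptdef] at this
        omega
      set p : Fin (m + 1) → Prop := fun i => i ≠ Fin.last m ∧ i ≠ pt with hpdef
      have hcard : Fintype.card {i // p i} = m - 1 := by
        rw [Fintype.card_subtype]
        have hfilter : Finset.univ.filter p
            = Finset.univ \ ({Fin.last m, pt} : Finset (Fin (m + 1))) := by
          ext i
          simp [hpdef]
        rw [hfilter, Finset.card_sdiff_of_subset (Finset.subset_univ _), Finset.card_univ,
          Fintype.card_fin, Finset.card_insert_of_notMem (by simpa using hptne.symm),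
          Finset.card_singleton]
        omega
      have hfixlast : ∀ x : MulAction.stabilizer (Perm (Fin (m + 1))) (Fin.last m),
          (↑x : Perm (Fin (m + 1))) (Fin.last m) = Fin.last m := fun x => x.2
      have hp : ∀ x : MulAction.stabilizer (MulAction.stabilizer (Perm (Fin (m + 1)))
          (Fin.last m)) pt, ∀ i, p i ↔ p ((↑↑x : Perm (Fin (m + 1))) i) := by
        intro x i
        have hx1 : (↑↑x : Perm (Fin (m + 1))) (Fin.last m) = Fin.last m := hfixlast x.1
        have hx2 : (↑↑x : Perm (Fin (m + 1))) pt = pt := x.2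
        have h1 : (↑↑x : Perm (Fin (m + 1))) i = Fin.last m ↔ i = Fin.last m :=
          ⟨fun h => (Equiv.injective _) (h.trans hx1.symm), fun h => h ▸ hx1⟩
        have h2 : (↑↑x : Perm (Fin (m + 1))) i = pt ↔ i = pt :=
          ⟨fun h => (Equiv.injective _) (h.trans hx2.symm), fun h => h ▸ hx2⟩
        simp only [hpdef, Ne, h1, h2]
      set φ : MulAction.stabilizer (MulAction.stabilizer (Perm (Fin (m + 1)))
          (Fin.last m)) pt →* Perm {i // p i} :=
        { toFun := fun x => Equiv.Perm.subtypePerm (↑↑x) (fun i => (hp x i).symm),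
          map_one' := by
            ext i
            simp [Equiv.Perm.subtypePerm_apply]
          map_mul' := fun x y => by
            ext i
            simp [Equiv.Perm.subtypePerm_apply, Equiv.Perm.mul_apply]
            rfl } with hφ
      have hbij : Function.Bijective φ := by
        constructor
        · rw [injective_iff_map_eq_one]
          intro x hx1'
          have hfix' : ∀ i, (↑↑x : Perm (Fin (m + 1))) i = i := by
            intro i
            by_cases hi : p i
            · have := congrArg (fun σ : Perm {i // p i} => (σ ⟨i, hi⟩ : Fin (m + 1))) hx1'
              simpa [hφ, Equiv.Perm.subtypePerm_apply] using this
            · simp only [hpdef, Ne, not_and_or, not_not] at hi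
              rcases hi with h | h
              · rw [h]; exact hfixlast x.1
              · rw [h]; exact x.2
          exact Subtype.ext (Subtype.ext (Equiv.ext hfix'))
        · intro σ
          have hlast' : Equiv.Perm.ofSubtype σ (Fin.last m) = Fin.last m :=
            Equiv.Perm.ofSubtype_apply_of_not_mem σ (by simp [hpdef])
          have hpt' : Equiv.Perm.ofSubtype σ pt = pt :=
            Equiv.Perm.ofSubtype_apply_of_not_mem σ (by simp [hpdef])
          refine ⟨⟨⟨Equiv.Perm.ofSubtype σ, hlast'⟩, hpt'⟩, ?_⟩
          ext i
          simp only [hφ, MonoidHom.coe_mk, OneHom.coe_mk, Equiv.Perm.subtypePerm_apply]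
          exact congrArg Fin.val (Equiv.Perm.ofSubtype_apply_coe σ i)
      exact ⟨(MulEquiv.ofBijective φ hbij).trans
        (permMulCongr (Fintype.equivFinOfCardEq hcard))⟩
  · intro _ x hx
    have hfix : ∀ p : Fin (m + 1), (↑x : Perm (Fin (m + 1))) p = p := by
      intro p
      have h1 := keyA ⟨finRotate (m + 1) ^ (m - p.val),
        Subgroup.pow_mem _ (Subgroup.mem_zpowers _) _⟩ x
      rw [hx] at h1
      have h2 : ((finRotate (m + 1) ^ (m - p.val) : Perm (Fin (m + 1))))⁻¹
          (Fin.last m) = p := by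
        refine Equiv.Perm.inv_eq_iff_eq.mpr ?_
        have := hval p.val (by omega)
        simpa using this.symm
      rw [show ((↑(⟨finRotate (m + 1) ^ (m - p.val),
        Subgroup.pow_mem _ (Subgroup.mem_zpowers _) _⟩ : Subgroup.zpowers (finRotate (m+1))) :
        Perm (Fin (m + 1))))⁻¹ (Fin.last m) = p from h2] at h1
      exact h1
    exact Subtype.ext (Equiv.ext hfix)
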